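/- Let n > 2, m₁ > ... > mₙ > 0, m_{s-1} > 1+r > m_s for some s ∈ {2,...,n} (with 1+r ≠ mₙ), I = {1,...,s-1}, J = {s,...,n}. Then for any subset A ⊆ Ω with I ⊆ A ≠ Ω, the minimum of Q(A) over all probability measures Q satisfying Σₖ m_k Q({k}) = 1+r and Q ≥ 0 equals ((1+r) − m_j̲)/(m₁ − m_j̲), where j̲ = min{j ∈ J : j ∉ A}. -/

import Mathlib

/-- Lower envelope of martingale measures on a set `A` with `I ⊆ A ≠ Ω`:
the minimum of `Q(A)` equals `((1+r) - m j̲)/(m 1 - m j̲)` where `j̲` is the least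
element of `J` not in `A`. -/
theorem lower_envelope_I_subset (n : ℕ) (hn : 2 < n) (m : Fin n → ℝ)
    (hm : StrictAnti m) (hmpos : ∀ k, 0 < m k) (r : ℝ)
    (s : Fin n) (hs : 1 ≤ s.val)
    (h1 : 1 + r < m ⟨s.val - 1, Nat.lt_of_le_of_lt (Nat.sub_le _ _) s.isLt⟩)
    (h2 : m s < 1 + r)
    (hrn : 1 + r ≠ m ⟨n - 1, by omega⟩)
    (A : Finset (Fin n)) (hIA : ∀ i : Fin n, i.val < s.val → i ∈ A)
    (hA : A ≠ Finset.univ)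
    (j0 : Fin n) (hj0J : s.val ≤ j0.val) (hj0A : j0 ∉ A)
    (hj0min : ∀ j : Fin n, s.val ≤ j.val → j ∉ A → j0 ≤ j) :
    IsLeast {x : ℝ | ∃ q : Fin n → ℝ, (∀ k, 0 ≤ q k) ∧ (∑ k, q k) = 1 ∧
        (∑ k, m k * q k) = 1 + r ∧ x = ∑ k ∈ A, q k}
      (((1 + r) - m j0) / (m ⟨0, by omega⟩ - m j0)) := by
  set i0 : Fin n := ⟨0, by omega⟩ with hi0
  have hi0j0 : i0 < j0 := by
    show 0 < j0.val; omega
  have hlt : m j0 < m i0 := hm hi0j0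
  have hm0 : 1 + r < m i0 := by
    refine lt_of_lt_of_le h1 (hm.antitone ?_)
    show 0 ≤ s.val - 1; omega
  have hmj : m j0 < 1 + r := by
    refine lt_of_le_of_lt (hm.antitone ?_) h2
    simp [Fin.le_def, hj0J]
  have hden : (0:ℝ) < m i0 - m j0 := by linarith
  constructor
  · -- membership
    set a : ℝ := ((1 + r) - m j0) / (m i0 - m j0) with ha
    set b : ℝ := (m i0 - (1 + r)) / (m i0 - m j0) with hb
    refine ⟨fun k => (if k = i0 then a else 0) + (if k = j0 then b else 0), ?_, ?_, ?_, ?_⟩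
    · intro k
      have ha0 : 0 ≤ a := div_nonneg (by linarith) (by linarith)
      have hb0 : 0 ≤ b := div_nonneg (by linarith) (by linarith)
      dsimp only
      split <;> split <;> simp_all <;> linarith
    · rw [Finset.sum_add_distrib]
      simp only [Fintype.sum_ite_eq']
      rw [ha, hb]
      field_simp
      ring
    · have : ∀ k, m k * ((if k = i0 then a else 0) + (if k = j0 then b else 0))
          = (if k = i0 then m i0 * a else 0) + (if k = j0 then m j0 * b else 0) := by
        intro k; split <;> split <;> simp_all <;> ring
      simp only [this]
      rw [Finset.sum_add_distrib]
      simp only [Fintype.sum_ite_eq']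
      rw [ha, hb]
      field_simp
      ring
    · rw [Finset.sum_add_distrib]
      have h0A : i0 ∈ A := hIA i0 (by show 0 < s.val; omega)
      rw [Finset.sum_ite_eq' A i0 (fun _ => a), Finset.sum_ite_eq' A j0 (fun _ => b)]
      simp [h0A, hj0A]
  · -- lower bound
    rintro x ⟨q, hq0, hq1, hqm, rfl⟩
    have hcompl : ∑ k ∈ Aᶜ, q k = 1 - ∑ k ∈ A, q k := by
      have := Finset.sum_add_sum_compl A q
      rw [hq1] at this; linarith
    have hA1 : ∑ k ∈ A, m k * q k ≤ m i0 * ∑ k ∈ A, q k := by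
      rw [Finset.mul_sum]
      refine Finset.sum_le_sum fun k _ => ?_
      exact mul_le_mul_of_nonneg_right (hm.antitone (show i0 ≤ k from Nat.zero_le _)) (hq0 k)
    have hA2 : ∑ k ∈ Aᶜ, m k * q k ≤ m j0 * ∑ k ∈ Aᶜ, q k := by
      rw [Finset.mul_sum]
      refine Finset.sum_le_sum fun k hk => ?_
      have hkA : k ∉ A := Finset.mem_compl.mp hk
      have hks : s.val ≤ k.val := by
        by_contra h
        exact hkA (hIA k (by omega))
      exact mul_le_mul_of_nonneg_right (hm.antitone (hj0min k hks hkA)) (hq0 k)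
    have htot : ∑ k ∈ A, m k * q k + ∑ k ∈ Aᶜ, m k * q k = 1 + r := by
      rw [Finset.sum_add_sum_compl A]; exact hqm
    have hkey : 1 + r ≤ m i0 * (∑ k ∈ A, q k) + m j0 * (1 - ∑ k ∈ A, q k) := by
      rw [← hcompl]; linarith
    rw [div_le_iff₀ hden]
    nlinarith
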